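/- Let φ satisfy the inhomogeneous wave equation ∂ₜ²φ − c²∂ₓ(r⁴∂ₓφ) = F on x > 0, and for weight functions A(x,t), B(x,t) define P₀ = A ∂ₜφ · cr²∂ₓφ + (1/2) B φ ∂ₜφ and P₁ = (1/2) A [(∂ₜφ)² + (cr²∂ₓφ)²] + (1/2) B φ · cr²∂ₓφ − (1/4) cr² (∂ₓB) φ². Then ∂ₓ(cr²P₁) − ∂ₜP₀ = ( (1/2)∂ₓ(cr²A) − B/2 )(∂ₜφ)² + ( (1/2)∂ₓ(cr²A) − A c ∂ₓr² + B/2 )(cr²∂ₓφ)² − (1/4) ∂ₓ(c²r⁴∂ₓB) φ² + A (r²∂ₓc)(cr²∂ₓφ)² − A (∂ₜ(cr²)/(cr²)) ∂ₜφ · cr²∂ₓφ + B (r²∂ₓc) φ · cr²∂ₓφ − (A cr²∂ₓφ + (1/2)Bφ) F − (∂ₜA) ∂ₜφ · cr²∂ₓφ − (1/2)(∂ₜB) φ ∂ₜφ. -/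

import Mathlib

/-- The pointwise divergence identity of Appendix A underlying the KSS-type estimate. -/
theorem kss_divergence_identity
    (φ φt φx φtt φtx φxx c ct cx r rt rx A At Ax B Bt Bx Bxx F D : ℝ → ℝ → ℝ)
    (hcpos : ∀ x t, 0 < c x t) (hrpos : ∀ x t, 0 < r x t)
    -- partial derivatives of φ (with equal mixed partials)
    (hφt : ∀ x t, HasDerivAt (fun τ => φ x τ) (φt x t) t)
    (hφx : ∀ x t, HasDerivAt (fun y => φ y t) (φx x t) x)
    (hφtt : ∀ x t, HasDerivAt (fun τ => φt x τ) (φtt x t) t)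
    (hφtx : ∀ x t, HasDerivAt (fun y => φt y t) (φtx x t) x)
    (hφxt : ∀ x t, HasDerivAt (fun τ => φx x τ) (φtx x t) t)
    (hφxx : ∀ x t, HasDerivAt (fun y => φx y t) (φxx x t) x)
    -- partial derivatives of the coefficients and weights
    (hct : ∀ x t, HasDerivAt (fun τ => c x τ) (ct x t) t)
    (hcx : ∀ x t, HasDerivAt (fun y => c y t) (cx x t) x)
    (hrt : ∀ x t, HasDerivAt (fun τ => r x τ) (rt x t) t)
    (hrx : ∀ x t, HasDerivAt (fun y => r y t) (rx x t) x)
    (hAt : ∀ x t, HasDerivAt (fun τ => A x τ) (At x t) t)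
    (hAx : ∀ x t, HasDerivAt (fun y => A y t) (Ax x t) x)
    (hBt : ∀ x t, HasDerivAt (fun τ => B x τ) (Bt x t) t)
    (hBx : ∀ x t, HasDerivAt (fun y => B y t) (Bx x t) x)
    (hBxx : ∀ x t, HasDerivAt (fun y => Bx y t) (Bxx x t) x)
    -- D = ∂ₓ(r⁴∂ₓφ) and the inhomogeneous wave equation ∂ₜ²φ − c²∂ₓ(r⁴∂ₓφ) = F
    (hD : ∀ x t, HasDerivAt (fun y => (r y t)^4 * φx y t) (D x t) x)
    (hwave : ∀ x t, φtt x t - (c x t)^2 * D x t = F x t) :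
    ∀ x t,
      -- ∂ₓ(cr²P₁) − ∂ₜP₀
      deriv (fun y => c y t * (r y t)^2 *
          ((1/2) * A y t * ((φt y t)^2 + (c y t * (r y t)^2 * φx y t)^2)
            + (1/2) * B y t * φ y t * (c y t * (r y t)^2 * φx y t)
            - (1/4) * c y t * (r y t)^2 * Bx y t * (φ y t)^2)) x
      - deriv (fun τ =>
          A x τ * φt x τ * (c x τ * (r x τ)^2 * φx x τ)
            + (1/2) * B x τ * φ x τ * φt x τ) t
      =
      ((1/2) * deriv (fun y => c y t * (r y t)^2 * A y t) x - B x t / 2) * (φt x t)^2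
      + ((1/2) * deriv (fun y => c y t * (r y t)^2 * A y t) x
          - A x t * c x t * deriv (fun y => (r y t)^2) x + B x t / 2)
        * (c x t * (r x t)^2 * φx x t)^2
      - (1/4) * deriv (fun y => (c y t)^2 * (r y t)^4 * Bx y t) x * (φ x t)^2
      + A x t * ((r x t)^2 * cx x t) * (c x t * (r x t)^2 * φx x t)^2
      - A x t * (deriv (fun τ => c x τ * (r x τ)^2) t / (c x t * (r x t)^2))
          * φt x t * (c x t * (r x t)^2 * φx x t)
      + B x t * ((r x t)^2 * cx x t) * φ x t * (c x t * (r x t)^2 * φx x t)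
      - (A x t * c x t * (r x t)^2 * φx x t + (1/2) * B x t * φ x t) * F x t
      - At x t * φt x t * (c x t * (r x t)^2 * φx x t)
      - (1/2) * Bt x t * φ x t * φt x t := by
  intro x t
  have hc := (hcpos x t).ne'
  have hr := (hrpos x t).ne'
  -- basic x-derivatives
  have hr2x : HasDerivAt (fun y => (r y t)^2) (2 * r x t * rx x t) x := by
    simpa using (hrx x t).fun_pow 2
  have hr4x : HasDerivAt (fun y => (r y t)^4) (4 * (r x t)^3 * rx x t) x := by
    simpa using (hrx x t).fun_pow 4
  have hc2x : HasDerivAt (fun y => (c y t)^2) (2 * c x t * cx x t) x := by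
    simpa using (hcx x t).fun_pow 2
  have hφ2x : HasDerivAt (fun y => (φ y t)^2) (2 * φ x t * φx x t) x := by
    simpa using (hφx x t).fun_pow 2
  have hφt2x : HasDerivAt (fun y => (φt y t)^2) (2 * φt x t * φtx x t) x := by
    simpa using (hφtx x t).fun_pow 2
  have hcr2x : HasDerivAt (fun y => c y t * (r y t)^2)
      (cx x t * (r x t)^2 + c x t * (2 * r x t * rx x t)) x := (hcx x t).fun_mul hr2x
  have hGx : HasDerivAt (fun y => c y t * (r y t)^2 * φx y t)
      ((cx x t * (r x t)^2 + c x t * (2 * r x t * rx x t)) * φx x t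
        + c x t * (r x t)^2 * φxx x t) x := hcr2x.fun_mul (hφxx x t)
  have hG2x : HasDerivAt (fun y => (c y t * (r y t)^2 * φx y t)^2)
      (2 * (c x t * (r x t)^2 * φx x t) *
        ((cx x t * (r x t)^2 + c x t * (2 * r x t * rx x t)) * φx x t
          + c x t * (r x t)^2 * φxx x t)) x := by
    simpa using hGx.fun_pow 2
  -- basic t-derivatives
  have hr2t : HasDerivAt (fun τ => (r x τ)^2) (2 * r x t * rt x t) t := by
    simpa using (hrt x t).fun_pow 2
  have hcr2t : HasDerivAt (fun τ => c x τ * (r x τ)^2)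
      (ct x t * (r x t)^2 + c x t * (2 * r x t * rt x t)) t := (hct x t).fun_mul hr2t
  -- the big x-derivative
  have hT1 : HasDerivAt (fun y => (1/2) * A y t * ((φt y t)^2 + (c y t * (r y t)^2 * φx y t)^2)) _ x :=
    (((hAx x t).const_mul (1/2 : ℝ)).fun_mul (hφt2x.add hG2x))
  have hT2 : HasDerivAt (fun y => (1/2) * B y t * φ y t * (c y t * (r y t)^2 * φx y t)) _ x :=
    ((((hBx x t).const_mul (1/2 : ℝ)).fun_mul (hφx x t)).fun_mul hGx)
  have hT3 : HasDerivAt (fun y => (1/4) * c y t * (r y t)^2 * Bx y t * (φ y t)^2) _ x :=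
    (((((hcx x t).const_mul (1/4 : ℝ)).fun_mul hr2x).fun_mul (hBxx x t)).fun_mul hφ2x)
  have hP1x : HasDerivAt (fun y => c y t * (r y t)^2 *
      ((1/2) * A y t * ((φt y t)^2 + (c y t * (r y t)^2 * φx y t)^2)
        + (1/2) * B y t * φ y t * (c y t * (r y t)^2 * φx y t)
        - (1/4) * c y t * (r y t)^2 * Bx y t * (φ y t)^2)) _ x :=
    hcr2x.fun_mul ((hT1.add hT2).sub hT3)
  -- the big t-derivative
  have hP0t : HasDerivAt (fun τ =>
      A x τ * φt x τ * (c x τ * (r x τ)^2 * φx x τ)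
        + (1/2) * B x τ * φ x τ * φt x τ) _ t :=
    (((hAt x t).fun_mul (hφtt x t)).fun_mul (hcr2t.fun_mul (hφxt x t))).add
      ((((hBt x t).const_mul (1/2 : ℝ)).fun_mul (hφt x t)).fun_mul (hφtt x t))
  -- right-hand side derivatives
  have hCRA : HasDerivAt (fun y => c y t * (r y t)^2 * A y t) _ x := hcr2x.fun_mul (hAx x t)
  have hCRB : HasDerivAt (fun y => (c y t)^2 * (r y t)^4 * Bx y t) _ x :=
    (hc2x.fun_mul hr4x).fun_mul (hBxx x t)
  -- D and F
  have hDval : D x t = (4 * (r x t)^3 * rx x t) * φx x t + (r x t)^4 * φxx x t :=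
    (hD x t).unique (hr4x.fun_mul (hφxx x t))
  have hF : F x t = φtt x t - (c x t)^2 * D x t := (hwave x t).symm
  rw [hP1x.deriv, hP0t.deriv, hCRA.deriv, hCRB.deriv, hr2x.deriv, hcr2t.deriv, hF, hDval]
  field_simp
  ring
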